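/- arXiv:2312.07989 — 4 statements merged into one kernel-verified Lean document; each statement's English description precedes it below -/
import Mathlib

section
/- Let X be an RDS in a finite group G with forbidden subgroup N and parameters (m,n,k,λ). Then X·X^{(-1)} = X^{(-1)}·X in ZG (X is i-commuting) if and only if X·N = N·X in ZG, where a set denotes the sum of its elements. -/
open Finset MonoidAlgebra

/-- The element of the integral group ring `ℤG` given by the sum of the elements of `X`. -/
noncomputable def gsum {G : Type*} [Group G] (X : Finset G) : MonoidAlgebra ℤ G :=
  ∑ x ∈ X, MonoidAlgebra.single x (1 : ℤ)

section Aux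

variable {G : Type*} [Group G]

/-- The antipode of the group ring, as an additive monoid hom. -/
noncomputable def antip : MonoidAlgebra ℤ G →+ MonoidAlgebra ℤ G :=
  { toFun := MonoidAlgebra.mapDomain (·⁻¹)
    map_zero' := MonoidAlgebra.mapDomain_zero _
    map_add' := MonoidAlgebra.mapDomain_add _ }

lemma antip_eq (f : MonoidAlgebra ℤ G) : antip f = MonoidAlgebra.mapDomain (·⁻¹) f := rfl

lemma antip_single (g : G) (r : ℤ) :
    antip (MonoidAlgebra.single g r) = MonoidAlgebra.single g⁻¹ r := by
  rw [antip_eq, MonoidAlgebra.mapDomain_single]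

lemma antip_apply (f : MonoidAlgebra ℤ G) (g : G) : (antip f).coeff g = f.coeff g⁻¹ := by
  have hinj : Function.Injective (fun x : G => x⁻¹) := fun a b h => by
    simpa using congrArg (·⁻¹) h
  have := Finsupp.mapDomain_apply (M := ℤ) hinj f.coeff g⁻¹
  simp only [inv_inv] at this
  rw [antip_eq]; exact this

lemma antip_mul (a b : MonoidAlgebra ℤ G) : antip (a * b) = antip b * antip a := by
  induction a using MonoidAlgebra.induction_linear with
  | zero => simp
  | add f g hf hg => simp [add_mul, mul_add, hf, hg]
  | single g r =>
    induction b using MonoidAlgebra.induction_linear with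
    | zero => simp
    | add f g hf hg => simp [add_mul, mul_add, hf, hg]
    | single h s =>
      show antip (MonoidAlgebra.single g r * MonoidAlgebra.single h s) = _
      rw [MonoidAlgebra.single_mul_single, antip_single, antip_single, antip_single,
        MonoidAlgebra.single_mul_single, mul_inv_rev, mul_comm r s]

lemma antip_gsum (X : Finset G) [DecidableEq G] :
    antip (gsum X) = gsum (X.image (·⁻¹)) := by
  rw [gsum, map_sum, gsum, Finset.sum_image (fun a _ b _ h => inv_injective h)]
  exact Finset.sum_congr rfl fun x _ => antip_single x 1

lemma trace_mul [Fintype G] (f g : MonoidAlgebra ℤ G) :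
    (f * g).coeff 1 = ∑ a : G, f.coeff a * g.coeff a⁻¹ := by
  classical
  rw [MonoidAlgebra.coeff_mul, Finsupp.sum,
    Finset.sum_subset (Finset.subset_univ f.coeff.support)
      (by intro a _ ha; rw [Finsupp.notMem_support_iff] at ha; simp [ha])]
  refine Finset.sum_congr rfl fun a _ => ?_
  rw [Finsupp.sum,
    Finset.sum_subset (Finset.subset_univ g.coeff.support)
      (by intro b _ hb; rw [Finsupp.notMem_support_iff] at hb; simp [hb])]
  rw [Finset.sum_eq_single a⁻¹]
  · simp
  · intro b _ hb
    have : a * b ≠ 1 := fun h => hb (eq_inv_of_mul_eq_one_right h)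
    simp [this]
  · simp

lemma trace_comm [Fintype G] (f g : MonoidAlgebra ℤ G) : (f * g).coeff 1 = (g * f).coeff 1 := by
  rw [trace_mul, trace_mul]
  exact Fintype.sum_equiv (Equiv.inv G) _ _ (fun a => by simp [mul_comm])

lemma eq_zero_of_trace [Fintype G] (x : MonoidAlgebra ℤ G) (h : (x * antip x).coeff 1 = 0) :
    x = 0 := by
  rw [trace_mul] at h
  simp only [antip_apply, inv_inv] at h
  have hz := (Finset.sum_eq_zero_iff_of_nonneg (fun a _ => mul_self_nonneg (x.coeff a))).mp h
  ext g
  have := hz g (Finset.mem_univ g)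
  simpa [mul_self_eq_zero] using this

lemma single_mul_guniv [Fintype G] (g : G) :
    MonoidAlgebra.single g (1 : ℤ) * gsum (Finset.univ : Finset G) = gsum Finset.univ := by
  rw [gsum, Finset.mul_sum]
  exact Fintype.sum_equiv (Equiv.mulLeft g) _ _ fun y => by
    simp [MonoidAlgebra.single_mul_single]

lemma guniv_mul_single [Fintype G] (g : G) :
    gsum (Finset.univ : Finset G) * MonoidAlgebra.single g (1 : ℤ) = gsum Finset.univ := by
  rw [gsum, Finset.sum_mul]
  exact Fintype.sum_equiv (Equiv.mulRight g) _ _ fun y => by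
    simp [MonoidAlgebra.single_mul_single]

lemma gsum_mul_univ [Fintype G] (X : Finset G) :
    gsum X * gsum (Finset.univ : Finset G) = X.card • gsum (Finset.univ : Finset G) := by
  rw [gsum, Finset.sum_mul]
  simp [single_mul_guniv, Finset.sum_const]

lemma univ_mul_gsum [Fintype G] (X : Finset G) :
    gsum (Finset.univ : Finset G) * gsum X = X.card • gsum (Finset.univ : Finset G) := by
  rw [show gsum X = ∑ x ∈ X, MonoidAlgebra.single x (1 : ℤ) from rfl, Finset.mul_sum]
  simp [guniv_mul_single, Finset.sum_const]

lemma nsmul_cancel (n : ℕ) (hn : 0 < n) (x : MonoidAlgebra ℤ G) (h : n • x = 0) : x = 0 := by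
  ext g
  have : (n • x).coeff g = (0 : MonoidAlgebra ℤ G).coeff g := by rw [h]
  rw [MonoidAlgebra.coeff_smul, Finsupp.smul_apply, nsmul_eq_mul] at this
  simp only [MonoidAlgebra.coeff_zero, Finsupp.coe_zero, Pi.zero_apply] at this
  have hn' : (n : ℤ) ≠ 0 := by exact_mod_cast hn.ne'
  have := (mul_eq_zero.mp this).resolve_left hn'
  simpa using this

end Aux

/-- An RDS `X` with forbidden subgroup `N` is i-commuting (`X·X⁽⁻¹⁾ = X⁽⁻¹⁾·X` in `ℤG`)
if and only if `X·N = N·X` in `ℤG`. -/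
theorem stmt2 {G : Type*} [Group G] [Fintype G] [DecidableEq G]
    (N : Subgroup G) [DecidablePred (· ∈ N)]
    (X : Finset G) (k lam : ℕ) (hk : X.card = k) (hlam : 0 < lam)
    (hRDS : gsum X * gsum (X.image (·⁻¹)) =
      k • (1 : MonoidAlgebra ℤ G) +
      lam • (gsum (Finset.univ : Finset G) - gsum (Finset.univ.filter (· ∈ N)))) :
    gsum X * gsum (X.image (·⁻¹)) = gsum (X.image (·⁻¹)) * gsum X ↔
      gsum X * gsum (Finset.univ.filter (· ∈ N)) =
        gsum (Finset.univ.filter (· ∈ N)) * gsum X := by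
  set A := gsum X with hA
  set B := gsum (X.image (·⁻¹)) with hB
  set Nh := gsum (Finset.univ.filter (· ∈ N)) with hNhdef
  set Gh := gsum (Finset.univ : Finset G) with hGh
  -- antipode facts
  have hSA : antip A = B := antip_gsum X
  have hSB : antip B = A := by
    rw [hB, antip_gsum, Finset.image_image]
    simp [Function.comp, hA]
  have hSN : antip Nh = Nh := by
    rw [hNhdef, antip_gsum]
    congr 1
    ext g
    simp only [Finset.mem_image, Finset.mem_filter, Finset.mem_univ, true_and]
    constructor
    · rintro ⟨a, ha, rfl⟩; exact N.inv_mem ha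
    · intro hg; exact ⟨g⁻¹, N.inv_mem hg, inv_inv g⟩
  -- Gh commutes with A and B
  have hGA : A * Gh = Gh * A := by rw [gsum_mul_univ, univ_mul_gsum]
  have hGB : B * Gh = Gh * B := by rw [gsum_mul_univ, univ_mul_gsum]
  -- the element lam • Nh
  have hNh : lam • Nh = k • (1 : MonoidAlgebra ℤ G) + lam • Gh - A * B := by
    rw [hRDS, smul_sub]; abel
  set D := B * A - A * B with hD
  have hcomm1 : lam • (A * Nh - Nh * A) = A * D := by
    have : A * (lam • Nh) - (lam • Nh) * A = A * D := by
      rw [hNh, hD]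
      simp only [mul_sub, sub_mul, mul_add, add_mul, mul_one, one_mul,
        mul_smul_comm, smul_mul_assoc, hGA, mul_assoc]
      abel
    rw [← this, smul_sub, mul_smul_comm, smul_mul_assoc]
  have hcomm2 : lam • (Nh * B - B * Nh) = D * B := by
    have : (lam • Nh) * B - B * (lam • Nh) = D * B := by
      rw [hNh, hD]
      simp only [mul_sub, sub_mul, mul_add, add_mul, mul_one, one_mul,
        mul_smul_comm, smul_mul_assoc, hGB, mul_assoc]
      abel
    rw [← this, smul_sub, mul_smul_comm, smul_mul_assoc]
  constructor
  · -- i-commuting → X·N = N·X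
    intro h
    have hD0 : D = 0 := by rw [hD, ← h, sub_self]
    have : lam • (A * Nh - Nh * A) = 0 := by rw [hcomm1, hD0, mul_zero]
    have h0 := nsmul_cancel lam hlam _ this
    exact sub_eq_zero.mp h0
  · -- X·N = N·X → i-commuting
    intro h
    have hADz : A * D = 0 := by
      rw [← hcomm1, h, sub_self, smul_zero]
    have hNB : Nh * B = B * Nh := by
      have := congrArg antip h
      rw [antip_mul, antip_mul, hSA, hSN] at this
      exact this
    have hDBz : D * B = 0 := by
      rw [← hcomm2, hNB, sub_self, smul_zero]
    -- from A*D = 0 : A*(B*A) = A*(A*B)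
    have h1 : A * (B * A) = A * (A * B) := by
      have := hADz; rw [hD, mul_sub, sub_eq_zero] at this; exact this
    -- from D*B = 0 : B*(A*B) = A*(B*B)
    have h2 : B * (A * B) = A * (B * B) := by
      have := hDBz
      rw [hD, sub_mul, sub_eq_zero, mul_assoc, mul_assoc] at this
      exact this
    set E := A * (B * B) with hE
    have hDD : D * D = A * E - E * A := by
      rw [hD, hE]
      simp only [sub_mul, mul_sub]
      simp only [mul_assoc]
      rw [h1, h2]
      abel
    have htr : (D * antip D).coeff 1 = 0 := by
      have hSD : antip D = D := by
        rw [hD, map_sub, antip_mul, antip_mul, hSA, hSB]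
      rw [hSD, hDD, MonoidAlgebra.coeff_sub, Finsupp.sub_apply, trace_comm, sub_self]
    have hD0 : D = 0 := eq_zero_of_trace D htr
    rw [hD, sub_eq_zero] at hD0
    exact hD0.symm
end

section
/- Let X be a semiregular RDS in a finite group G with forbidden subgroup N. Then N·X = G in ZG, i.e., X is a right transversal for N in G. -/
open Finset MonoidAlgebra

lemma gsum_apply {G : Type*} [Group G] [DecidableEq G] (X : Finset G) (g : G) :
    (gsum X).coeff g = if g ∈ X then (1:ℤ) else 0 := by
  rw [gsum, coeff_sum, Finsupp.finset_sum_apply]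
  simp [coeff_single, Finsupp.single_apply]

lemma gsum_mul_apply {G : Type*} [Group G] [DecidableEq G] (X Y : Finset G) (g : G) :
    (gsum X * gsum Y).coeff g = ∑ x ∈ X, ∑ y ∈ Y, if x * y = g then (1:ℤ) else 0 := by
  have : gsum X * gsum Y = ∑ x ∈ X, ∑ y ∈ Y, MonoidAlgebra.single (x*y) (1:ℤ) := by
    simp [gsum, Finset.sum_mul, Finset.mul_sum, MonoidAlgebra.single_mul_single]
    exact Finset.sum_comm
  rw [this, coeff_sum, Finsupp.finset_sum_apply]
  refine Finset.sum_congr rfl fun x _ => ?_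
  rw [coeff_sum, Finsupp.finset_sum_apply]
  refine Finset.sum_congr rfl fun y _ => ?_
  simp [coeff_single, Finsupp.single_apply]

/-- If `X` is a semiregular RDS in a finite group `G` with forbidden subgroup `N`
(i.e. an RDS with `|X| = |G : N|`), then `N·X = G` in `ℤG`; equivalently, `X` is a
right transversal for `N` in `G`: each right coset `Ng` contains exactly one element
of `X`. -/
theorem stmt3 {G : Type*} [Group G] [Fintype G] [DecidableEq G]
    (N : Subgroup G) [DecidablePred (· ∈ N)]
    (X : Finset G) (lam : ℕ) (hlam : 0 < lam)
    (hRDS : gsum X * gsum (X.image (·⁻¹)) =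
      X.card • (1 : MonoidAlgebra ℤ G) +
      lam • (gsum (Finset.univ : Finset G) - gsum (Finset.univ.filter (· ∈ N))))
    (hsemi : X.card = N.index) :
    gsum (Finset.univ.filter (· ∈ N)) * gsum X = gsum (Finset.univ : Finset G) ∧
      ∀ g : G, ∃! x : G, x ∈ X ∧ x * g⁻¹ ∈ N := by
  -- Key: distinct elements of X lie in distinct right cosets of N.
  have key : ∀ x ∈ X, ∀ y ∈ X, x * y⁻¹ ∈ N → x = y := by
    intro x hx y hy hmem
    by_contra hne
    set n := x * y⁻¹ with hn
    have hn1 : n ≠ 1 := fun h => hne (mul_inv_eq_one.mp h)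
    have hcong : (∑ a ∈ X, ∑ b ∈ X.image (·⁻¹), if a * b = n then (1:ℤ) else 0)
        = (X.card • (1 : MonoidAlgebra ℤ G) +
          lam • (gsum (Finset.univ : Finset G) - gsum (Finset.univ.filter (· ∈ N)))).coeff n := by
      rw [← gsum_mul_apply, hRDS]
    have hrhs : (X.card • (1 : MonoidAlgebra ℤ G) +
        lam • (gsum (Finset.univ : Finset G) - gsum (Finset.univ.filter (· ∈ N)))).coeff n = 0 := by
      rw [coeff_add, Finsupp.add_apply, coeff_smul, Finsupp.smul_apply, coeff_smul, Finsupp.smul_apply,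
        coeff_sub, Finsupp.sub_apply,
        gsum_apply, gsum_apply, MonoidAlgebra.one_def, coeff_single, Finsupp.single_apply]
      simp [hmem, (Ne.symm hn1)]
    rw [hrhs] at hcong
    have hpos : (1:ℤ) ≤ ∑ a ∈ X, ∑ b ∈ X.image (·⁻¹), if a * b = n then (1:ℤ) else 0 := by
      have h1 : (1:ℤ) ≤ ∑ b ∈ X.image (·⁻¹), if x * b = n then (1:ℤ) else 0 := by
        have hyinv : y⁻¹ ∈ X.image (·⁻¹) := Finset.mem_image_of_mem _ hy
        calc (1:ℤ) = if x * y⁻¹ = n then (1:ℤ) else 0 := by simp [hn]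
          _ ≤ _ := Finset.single_le_sum (f := fun b => if x * b = n then (1:ℤ) else 0)
              (fun b _ => by split <;> norm_num) hyinv
      calc (1:ℤ) ≤ _ := h1
        _ ≤ _ := Finset.single_le_sum
            (f := fun a => ∑ b ∈ X.image (·⁻¹), if a * b = n then (1:ℤ) else 0)
            (fun a _ => Finset.sum_nonneg fun b _ => by split <;> norm_num) hx
    omega
  have uniq : ∀ g : G, ∀ x ∈ X, ∀ y ∈ X, x * g⁻¹ ∈ N → y * g⁻¹ ∈ N → x = y := by
    intro g x hx y hy h1 h2
    have : x * y⁻¹ ∈ N := by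
      have := mul_mem h1 (inv_mem h2)
      simpa [mul_assoc] using this
    exact key x hx y hy this
  have hex : ∀ g : G, ∃ x ∈ X, x * g⁻¹ ∈ N := by
    have hinj : Function.Injective
        (fun x : {x // x ∈ X} => (QuotientGroup.mk (x : G)⁻¹ : G ⧸ N)) := by
      intro a b hab
      have : (a:G) * (b:G)⁻¹ ∈ N := by
        rw [QuotientGroup.eq] at hab
        simpa using hab
      exact Subtype.ext (key a a.2 b b.2 this)
    have hcard : Fintype.card {x // x ∈ X} = Fintype.card (G ⧸ N) := by
      rw [Fintype.card_coe, hsemi, Subgroup.index_eq_card, Nat.card_eq_fintype_card]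
    have hsurj := ((Fintype.bijective_iff_injective_and_card _).mpr ⟨hinj, hcard⟩).2
    intro g
    obtain ⟨x, hxq⟩ := hsurj (QuotientGroup.mk g⁻¹)
    refine ⟨x, x.2, ?_⟩
    rw [QuotientGroup.eq] at hxq
    simpa using hxq
  have hEU : ∀ g : G, ∃! x : G, x ∈ X ∧ x * g⁻¹ ∈ N := by
    intro g
    obtain ⟨x, hx, hN⟩ := hex g
    exact ⟨x, ⟨hx, hN⟩, fun y hy => uniq g y hy.1 x hx hy.2 hN⟩
  refine ⟨?_, hEU⟩
  ext g
  rw [gsum_mul_apply, gsum_apply, Finset.sum_comm]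
  have inner : ∀ x ∈ X, (∑ n' ∈ Finset.univ.filter (· ∈ N), if n' * x = g then (1:ℤ) else 0)
      = if x * g⁻¹ ∈ N then (1:ℤ) else 0 := by
    intro x _
    have heq : ∀ n' : G, (n' * x = g) ↔ (n' = g * x⁻¹) := by
      intro n'; constructor
      · intro h; rw [← h]; group
      · intro h; rw [h]; group
    simp only [heq]
    rw [Finset.sum_ite_eq' (Finset.univ.filter (· ∈ N)) (g * x⁻¹) (fun _ => (1:ℤ))]
    congr 1
    simp only [Finset.mem_filter, Finset.mem_univ, true_and, eq_iff_iff]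
    constructor
    · intro h; simpa using inv_mem h
    · intro h; simpa using inv_mem h
  rw [Finset.sum_congr rfl inner]
  obtain ⟨x₀, ⟨hx₀, hx₀N⟩, hu⟩ := hEU g
  have hfilter : X.filter (fun x => x * g⁻¹ ∈ N) = {x₀} := by
    ext y
    simp only [Finset.mem_filter, Finset.mem_singleton]
    constructor
    · intro ⟨h1, h2⟩; exact hu y ⟨h1, h2⟩
    · rintro rfl; exact ⟨hx₀, hx₀N⟩
  rw [← Finset.sum_filter, hfilter]
  simp
end

section
/- Let q be an odd prime power and G the Heisenberg group of 3×3 upper unitriangular matrices over F_q. For a nonsquare ε ∈ F_q and M = [[α,β],[εβ,α]] with (α,β) ≠ (0,0), the map φ(M) sending the unitriangular matrix with entries (x, y, z) to the one with entries (αx + εβy, βx + αy, F_{α,β}(x,y,z)), where F_{α,β}(x,y,z) = αβ(x²/2 + εy²/2) + εβ²xy + (α² − εβ²)z, is an automorphism of G, and M ↦ φ(M) is an injective group homomorphism from M(ε) into Aut(G). -/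
/-- The Heisenberg group of dimension 3 over a field `F`, with coordinates `(x, y, z)`
corresponding to the unitriangular matrix `[[1,x,z],[0,1,y],[0,0,1]]`. -/
def Heis (F : Type*) := F × F × F

namespace Heis
variable {F : Type*} [Field F]

instance : Mul (Heis F) :=
  ⟨fun a b => (a.1 + b.1, a.2.1 + b.2.1, a.2.2 + b.2.2 + a.1 * b.2.1)⟩
instance : One (Heis F) := ⟨((0 : F), (0 : F), (0 : F))⟩
instance : Inv (Heis F) := ⟨fun a => (-a.1, -a.2.1, -a.2.2 + a.1 * a.2.1)⟩

lemma mul_def (a b : Heis F) :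
    a * b = (a.1 + b.1, a.2.1 + b.2.1, a.2.2 + b.2.2 + a.1 * b.2.1) := rfl
lemma one_def : (1 : Heis F) = ((0 : F), (0 : F), (0 : F)) := rfl
lemma inv_def (a : Heis F) : a⁻¹ = (-a.1, -a.2.1, -a.2.2 + a.1 * a.2.1) := rfl

instance : Group (Heis F) where
  mul_assoc a b c := by
    rw [mul_def, mul_def, mul_def, mul_def]
    exact Prod.ext (by ring) (Prod.ext (by ring) (by ring))
  one_mul a := by
    rw [mul_def, one_def]
    obtain ⟨x, y, z⟩ := a
    exact Prod.ext (by simp) (Prod.ext (by simp) (by simp))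
  mul_one a := by
    rw [mul_def, one_def]
    obtain ⟨x, y, z⟩ := a
    exact Prod.ext (by simp) (Prod.ext (by simp) (by simp))
  inv_mul_cancel a := by
    rw [mul_def, inv_def, one_def]
    obtain ⟨x, y, z⟩ := a
    exact Prod.ext (by simp) (Prod.ext (by simp) (by ring))

instance [DecidableEq F] : DecidableEq (Heis F) :=
  inferInstanceAs (DecidableEq (F × F × F))

instance [Fintype F] : Fintype (Heis F) :=
  inferInstanceAs (Fintype (F × F × F))

end Heis

open Heis

/-- The cyclotomic action map `φ(M)` on the Heisenberg group, for
`M = [[α, β],[εβ, α]]`. -/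
def phiFun {F : Type*} [Field F] (ε α β : F) : Heis F → Heis F := fun g =>
  (α * g.1 + ε * β * g.2.1,
   β * g.1 + α * g.2.1,
   α * β * (g.1 ^ 2 / 2 + ε * g.2.1 ^ 2 / 2) + ε * β ^ 2 * g.1 * g.2.1 +
     (α ^ 2 - ε * β ^ 2) * g.2.2)


section Helpers
variable {F : Type*} [Field F]

lemma phi_comp (ε a b c d : F) (h2 : (2 : F) ≠ 0) :
    phiFun ε a b ∘ phiFun ε c d = phiFun ε (a * c + ε * b * d) (a * d + b * c) := by
  funext g
  obtain ⟨x, y, z⟩ := g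
  show phiFun ε a b (phiFun ε c d (x, y, z)) = _
  simp only [phiFun]
  refine Prod.ext (by ring) (Prod.ext (by ring) ?_)
  field_simp
  ring

lemma phi_one (ε : F) : phiFun ε 1 0 = id := by
  funext g
  obtain ⟨x, y, z⟩ := g
  simp [phiFun]
  rfl

lemma phi_mul (ε a b : F) (h2 : (2 : F) ≠ 0) (g h : Heis F) :
    phiFun ε a b (g * h) = phiFun ε a b g * phiFun ε a b h := by
  rw [Heis.mul_def, Heis.mul_def]
  obtain ⟨x, y, z⟩ := g
  obtain ⟨u, v, w⟩ := h
  simp only [phiFun]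
  refine Prod.ext (by ring) (Prod.ext (by ring) ?_)
  field_simp
  ring

end Helpers

/-- For an odd prime power `q` and a nonsquare `ε ∈ F_q`, each map `φ(M)` (for
`M = [[α,β],[εβ,α]]` with `(α,β) ≠ (0,0)`) is an automorphism of the Heisenberg group
over `F_q`, and `M ↦ φ(M)` is an injective group homomorphism from `M(ε)` into `Aut(G)`. -/
theorem stmt11 {F : Type*} [Field F] [Fintype F] (q : ℕ) (hq : Fintype.card F = q)
    (hodd : Odd q) (ε : F) (hε : ∀ γ : F, γ ^ 2 ≠ ε) :
    (∀ α β : F, (α, β) ≠ (0, 0) → ∃ φ : Heis F ≃* Heis F, ⇑φ = phiFun ε α β) ∧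
    (∀ α₁ β₁ α₂ β₂ : F, (α₁, β₁) ≠ (0, 0) → (α₂, β₂) ≠ (0, 0) →
      ∀ A : Matrix (Fin 2) (Fin 2) F,
        A = !![α₁, β₁; ε * β₁, α₁] * !![α₂, β₂; ε * β₂, α₂] →
        phiFun ε (A 0 0) (A 0 1) = phiFun ε α₁ β₁ ∘ phiFun ε α₂ β₂) ∧
    (∀ α₁ β₁ α₂ β₂ : F, (α₁, β₁) ≠ (0, 0) → (α₂, β₂) ≠ (0, 0) →
      phiFun ε α₁ β₁ = phiFun ε α₂ β₂ → (α₁, β₁) = (α₂, β₂)) := by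
  have h2 : (2 : F) ≠ 0 := by
    intro h
    have hchar : ringChar F ∣ 2 := ringChar.dvd (by exact_mod_cast h)
    have h1 : ringChar F ≠ 1 := CharP.ringChar_ne_one
    have : ringChar F = 2 := ((Nat.prime_two).eq_one_or_self_of_dvd _ hchar).resolve_left h1
    have := FiniteField.even_card_of_char_two (F := F) this
    rw [hq] at this
    have := Nat.odd_iff.mp hodd; omega
  have hdet : ∀ α β : F, (α, β) ≠ (0, 0) → α ^ 2 - ε * β ^ 2 ≠ 0 := by
    intro α β hne h
    rcases eq_or_ne β 0 with hb | hb
    · subst hb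
      have : α = 0 := by
        have h0 : α ^ 2 = 0 := by linear_combination h
        exact pow_eq_zero_iff (n := 2) (by norm_num) |>.mp h0
      exact hne (by simp [this])
    · exact hε (α / β) (by field_simp; linear_combination sub_eq_zero.mp h)
  refine ⟨?_, ?_, ?_⟩
  · intro α β hne
    set d := α ^ 2 - ε * β ^ 2 with hd
    have hdne := hdet α β hne
    refine ⟨{ toFun := phiFun ε α β
              invFun := phiFun ε (α / d) (-β / d)
              left_inv := ?_
              right_inv := ?_
              map_mul' := phi_mul ε α β h2 }, rfl⟩
    · intro g
      show (phiFun ε (α / d) (-β / d) ∘ phiFun ε α β) g = g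
      rw [congrFun (phi_comp ε (α / d) (-β / d) α β h2) g]
      have h1 : α / d * α + ε * (-β / d) * β = 1 := by rw [hd]; field_simp; ring
      have h0 : α / d * β + -β / d * α = 0 := by ring
      rw [h1, h0, phi_one]
      rfl
    · intro g
      show (phiFun ε α β ∘ phiFun ε (α / d) (-β / d)) g = g
      rw [congrFun (phi_comp ε α β (α / d) (-β / d) h2) g]
      have h1 : α * (α / d) + ε * β * (-β / d) = 1 := by rw [hd]; field_simp; ring
      have h0 : α * (-β / d) + β * (α / d) = 0 := by ring
      rw [h1, h0, phi_one]
      rfl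
  · intro α₁ β₁ α₂ β₂ _ _ A hA
    subst hA
    rw [phi_comp ε α₁ β₁ α₂ β₂ h2]
    congr 1 <;> simp [Matrix.mul_apply, Fin.sum_univ_two, Matrix.of_apply] <;> ring
  · intro α₁ β₁ α₂ β₂ _ _ h
    have h1 := congrFun h (1, 0, 0)
    simp only [phiFun, mul_one, mul_zero, add_zero] at h1
    have hα : α₁ = α₂ := congrArg Prod.fst h1
    have hβ : β₁ = β₂ := congrArg (fun p => p.2.1) h1
    simp [hα, hβ]
end

section
/- Let q be an odd prime power and δ ∈ F_q a nonsquare. Define on F_q^∞ = F_q ∪ {∞} the operation: i * j = (ij + δ)/(i + j) for i, j ∈ F_q with i + j ≠ 0; i * (−i) = ∞; i * ∞ = ∞ * i = i; ∞ * ∞ = ∞. Then (F_q^∞, *) is a cyclic group of order q + 1 with identity ∞ and inversion i ↦ −i. -/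
open Polynomial


/-- For `q` an odd prime power and a nonsquare `δ ∈ F_q`, the set
`F_q^∞ = F_q ∪ {∞}` (modelled as `Option F`, with `∞ = none`) equipped with the
operation `i * j = (ij + δ)/(i + j)` for `i + j ≠ 0`, `i * (−i) = ∞`,
`i * ∞ = ∞ * i = i`, `∞ * ∞ = ∞`, is a cyclic group of order `q + 1` with identity `∞`
and inversion `i ↦ −i`. -/
theorem stmt16 {F : Type*} [Field F] [Fintype F] [DecidableEq F]
    (q : ℕ) (hq : Fintype.card F = q) (hodd : Odd q)
    (δ : F) (hδ : ∀ γ : F, γ ^ 2 ≠ δ)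
    (mul : Option F → Option F → Option F)
    (h1 : ∀ i j : F, i + j ≠ 0 → mul (some i) (some j) = some ((i * j + δ) / (i + j)))
    (h2 : ∀ i : F, mul (some i) (some (-i)) = none)
    (h3 : ∀ a, mul a none = a) (h4 : ∀ a, mul none a = a) :
    (∀ a b c, mul (mul a b) c = mul a (mul b c)) ∧
    (∀ a, mul a (Option.map (fun i : F => -i) a) = none ∧
      mul (Option.map (fun i : F => -i) a) a = none) ∧
    Fintype.card (Option F) = q + 1 ∧
    (∃ x : Option F, ∀ y : Option F, ∃ k : ℕ, y = (fun z => mul x z)^[k] none) := by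
  classical
  have hirr : Irreducible (X ^ 2 - C δ : F[X]) :=
    X_pow_sub_C_irreducible_of_prime Nat.prime_two hδ
  haveI : Fact (Irreducible (X ^ 2 - C δ : F[X])) := ⟨hirr⟩
  have hPne : (X ^ 2 - C δ : F[X]) ≠ 0 := hirr.ne_zero
  have hmonic : (X ^ 2 - C δ : F[X]).Monic := monic_X_pow_sub_C δ two_ne_zero
  have hroot : (AdjoinRoot.root (X ^ 2 - C δ : F[X])) ^ 2
      = algebraMap F (AdjoinRoot (X ^ 2 - C δ : F[X])) δ := by
    have h := AdjoinRoot.eval₂_root (X ^ 2 - C δ : F[X])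
    rw [AdjoinRoot.algebraMap_eq]
    simpa [sub_eq_zero] using h
  have exrep : ∀ z : AdjoinRoot (X ^ 2 - C δ : F[X]), ∃ x y : F,
      z = algebraMap F _ x + algebraMap F _ y * AdjoinRoot.root (X ^ 2 - C δ : F[X]) := by
    intro z
    obtain ⟨g, rfl⟩ := AdjoinRoot.mk_surjective z
    refine ⟨(g %ₘ (X ^ 2 - C δ)).coeff 0, (g %ₘ (X ^ 2 - C δ)).coeff 1, ?_⟩
    have hdeg : (g %ₘ (X ^ 2 - C δ)).degree < ((2 : ℕ) : WithBot ℕ) := by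
      simpa [degree_X_pow_sub_C] using degree_modByMonic_lt g hmonic
    have hle : (g %ₘ (X ^ 2 - C δ)).degree ≤ 1 := by
      by_cases h0 : (g %ₘ (X ^ 2 - C δ)) = 0
      · simp [h0]
      · have hnd : (g %ₘ (X ^ 2 - C δ)).natDegree < 2 :=
          (natDegree_lt_iff_degree_lt h0).mpr hdeg
        exact_mod_cast degree_le_of_natDegree_le (Nat.lt_succ_iff.mp hnd)
    have hmk : AdjoinRoot.mk (X ^ 2 - C δ : F[X]) g
        = AdjoinRoot.mk (X ^ 2 - C δ : F[X]) (g %ₘ (X ^ 2 - C δ)) := by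
      rw [AdjoinRoot.mk_eq_mk, modByMonic_eq_sub_mul_div g (X ^ 2 - C δ)]
      exact ⟨g /ₘ (X ^ 2 - C δ), by ring⟩
    rw [hmk]
    conv_lhs => rw [eq_X_add_C_of_degree_le_one hle]
    rw [map_add, map_mul, AdjoinRoot.mk_C, AdjoinRoot.mk_C, AdjoinRoot.mk_X,
      ← AdjoinRoot.algebraMap_eq]
    ring
  have uniq : ∀ x y x' y' : F,
      algebraMap F (AdjoinRoot (X ^ 2 - C δ : F[X])) x
        + algebraMap F _ y * AdjoinRoot.root (X ^ 2 - C δ : F[X])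
      = algebraMap F _ x' + algebraMap F _ y' * AdjoinRoot.root (X ^ 2 - C δ : F[X])
      → x = x' ∧ y = y' := by
    intro x y x' y' h
    have hinj : Function.Injective (algebraMap F (AdjoinRoot (X ^ 2 - C δ : F[X]))) :=
      (algebraMap F _).injective
    by_cases hyy : y = y'
    · subst hyy
      exact ⟨hinj (add_right_cancel h), rfl⟩
    · exfalso
      have hy2 : algebraMap F (AdjoinRoot (X ^ 2 - C δ : F[X])) y'
          - algebraMap F _ y ≠ 0 := by
        rw [← map_sub]
        intro hc
        exact hyy (sub_eq_zero.mp (hinj (by simpa using hc))).symm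
      have hr : AdjoinRoot.root (X ^ 2 - C δ : F[X])
          = algebraMap F _ ((x - x') / (y' - y)) := by
        rw [map_div₀, map_sub, map_sub, eq_div_iff hy2]
        linear_combination -h
      apply hδ ((x - x') / (y' - y))
      apply hinj
      rw [map_pow, ← hr, hroot]
  choose aa bb hab using exrep
  have spec : ∀ x y : F,
      aa (algebraMap F _ x + algebraMap F _ y * AdjoinRoot.root (X ^ 2 - C δ : F[X])) = x ∧
      bb (algebraMap F _ x + algebraMap F _ y * AdjoinRoot.root (X ^ 2 - C δ : F[X])) = y := by
    intro x y
    exact uniq _ _ x y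
      (hab (algebraMap F _ x + algebraMap F _ y * AdjoinRoot.root (X ^ 2 - C δ : F[X]))).symm
  have hone : aa 1 = 1 ∧ bb 1 = 0 := by
    have h := spec 1 0; simpa using h
  have hmulc : ∀ z w : AdjoinRoot (X ^ 2 - C δ : F[X]),
      aa (z * w) = aa z * aa w + δ * (bb z * bb w) ∧
      bb (z * w) = aa z * bb w + bb z * aa w := by
    intro z w
    have hzw : z * w = algebraMap F _ (aa z * aa w + δ * (bb z * bb w))
        + algebraMap F _ (aa z * bb w + bb z * aa w) * AdjoinRoot.root (X ^ 2 - C δ : F[X]) := by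
      conv_lhs => rw [hab z, hab w]
      simp only [map_add, map_mul]
      linear_combination (algebraMap F (AdjoinRoot (X ^ 2 - C δ : F[X])) (bb z)
        * algebraMap F (AdjoinRoot (X ^ 2 - C δ : F[X])) (bb w)) * hroot
    rw [hzw]
    exact spec _ _
  have hnz : ∀ z : AdjoinRoot (X ^ 2 - C δ : F[X]), z ≠ 0 → ¬(aa z = 0 ∧ bb z = 0) := by
    intro z hz ⟨ha, hb⟩
    apply hz
    rw [hab z, ha, hb]; simp
  set ψ : (AdjoinRoot (X ^ 2 - C δ : F[X]))ˣ → Option F :=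
    fun u => if bb (u : AdjoinRoot (X ^ 2 - C δ : F[X])) = 0
      then none else some (aa (u : AdjoinRoot (X ^ 2 - C δ : F[X])) /
        bb (u : AdjoinRoot (X ^ 2 - C δ : F[X]))) with hψdef
  have hψ_eq : ∀ w : (AdjoinRoot (X ^ 2 - C δ : F[X]))ˣ,
      ψ w = if bb (w : AdjoinRoot (X ^ 2 - C δ : F[X])) = 0
      then none else some (aa (w : AdjoinRoot (X ^ 2 - C δ : F[X])) /
        bb (w : AdjoinRoot (X ^ 2 - C δ : F[X]))) := fun _ => rfl
  have hψone : ψ 1 = none := by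
    rw [hψ_eq, Units.val_one, if_pos hone.2]
  have hom : ∀ u v : (AdjoinRoot (X ^ 2 - C δ : F[X]))ˣ,
      ψ (u * v) = mul (ψ u) (ψ v) := by
    intro u v
    have hcu := hmulc (u : AdjoinRoot (X ^ 2 - C δ : F[X])) (v : AdjoinRoot (X ^ 2 - C δ : F[X]))
    set A := aa (u : AdjoinRoot (X ^ 2 - C δ : F[X])) with hA
    set B := bb (u : AdjoinRoot (X ^ 2 - C δ : F[X])) with hB
    set Cc := aa (v : AdjoinRoot (X ^ 2 - C δ : F[X])) with hC
    set D := bb (v : AdjoinRoot (X ^ 2 - C δ : F[X])) with hD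
    have huv : ψ (u * v) = if A * D + B * Cc = 0 then none
        else some ((A * Cc + δ * (B * D)) / (A * D + B * Cc)) := by
      rw [hψ_eq, Units.val_mul, hcu.1, hcu.2]
    by_cases hBz : B = 0
    · have hAz : A ≠ 0 := fun hAz => hnz _ u.ne_zero ⟨hAz, hBz⟩
      have hψu : ψ u = none := by rw [hψ_eq, if_pos hBz]
      by_cases hDz : D = 0
      · have hψv : ψ v = none := by rw [hψ_eq, if_pos hDz]
        rw [hψu, hψv, h3, huv, if_pos (by rw [hBz, hDz]; ring)]
      · have hψv : ψ v = some (Cc / D) := by rw [hψ_eq, if_neg hDz]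
        rw [hψu, hψv, h4, huv, hBz,
          if_neg (by simpa using mul_ne_zero hAz hDz)]
        congr 1
        rw [zero_mul, zero_mul, mul_zero, add_zero, add_zero, mul_div_mul_left Cc D hAz]
    · by_cases hDz : D = 0
      · have hCz : Cc ≠ 0 := fun hCz => hnz _ v.ne_zero ⟨hCz, hDz⟩
        have hψu : ψ u = some (A / B) := by rw [hψ_eq, if_neg hBz]
        have hψv : ψ v = none := by rw [hψ_eq, if_pos hDz]
        rw [hψu, hψv, h3, huv, hDz,
          if_neg (by simpa using mul_ne_zero hBz hCz)]
        congr 1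
        rw [mul_zero, mul_zero, mul_zero, add_zero, zero_add, mul_comm A Cc, mul_comm B Cc,
          mul_div_mul_left A B hCz]
      · have hψu : ψ u = some (A / B) := by rw [hψ_eq, if_neg hBz]
        have hψv : ψ v = some (Cc / D) := by rw [hψ_eq, if_neg hDz]
        rw [hψu, hψv]
        by_cases hs : A * D + B * Cc = 0
        · have hj : Cc / D = -(A / B) := by
            field_simp
            linear_combination hs
          rw [hj, h2, huv, if_pos hs]
        · have hsum : A / B + Cc / D ≠ 0 := by
            intro hc
            apply hs
            field_simp at hc
            linear_combination hc
          rw [h1 _ _ hsum, huv, if_neg hs]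
          congr 1
          rw [div_eq_div_iff hs hsum]
          field_simp
  have surj : ∀ y : Option F, ∃ u, ψ u = y := by
    intro y
    match y with
    | none => exact ⟨1, hψone⟩
    | some i =>
      have hz : (algebraMap F (AdjoinRoot (X ^ 2 - C δ : F[X])) i
          + algebraMap F _ 1 * AdjoinRoot.root (X ^ 2 - C δ : F[X])) ≠ 0 := by
        intro hc
        have h0 : i = 0 ∧ (1 : F) = 0 := uniq i 1 0 0 (by simpa using hc)
        exact one_ne_zero h0.2
      refine ⟨Units.mk0 _ hz, ?_⟩
      have hs := spec i 1
      rw [hψ_eq, Units.val_mk0, hs.1, hs.2, if_neg one_ne_zero, div_one]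
  haveI : Module.Finite F (AdjoinRoot (X ^ 2 - C δ : F[X])) :=
    (AdjoinRoot.powerBasis hPne).finite
  haveI : Finite (AdjoinRoot (X ^ 2 - C δ : F[X])) := Module.finite_of_finite F
  obtain ⟨g, hg⟩ := IsCyclic.exists_monoid_generator (α := (AdjoinRoot (X ^ 2 - C δ : F[X]))ˣ)
  have hiter : ∀ k : ℕ, ψ (g ^ k) = (fun z => mul (ψ g) z)^[k] none := by
    intro k
    induction k with
    | zero => simpa using hψone
    | succ n ih =>
      rw [Function.iterate_succ_apply', ← ih, pow_succ', hom]
  refine ⟨?_, ?_, ?_, ?_⟩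
  · intro a b c
    obtain ⟨u, rfl⟩ := surj a
    obtain ⟨v, rfl⟩ := surj b
    obtain ⟨w, rfl⟩ := surj c
    rw [← hom, ← hom, ← hom, ← hom, mul_assoc]
  · intro a
    match a with
    | none => simpa using h3 none
    | some i =>
      refine ⟨h2 i, ?_⟩
      simpa using h2 (-i)
  · simp [Fintype.card_option, hq]
  · refine ⟨ψ g, ?_⟩
    intro y
    obtain ⟨u, rfl⟩ := surj y
    obtain ⟨k, hk⟩ := hg u
    exact ⟨k, by rw [← hk, hiter]⟩
end
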